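/- arXiv:2212.07365 — 8 statements merged into one kernel-verified Lean document; each statement's English description precedes it below -/
import Mathlib

section
/- Let m be a positive integer, let y, μ_l, μ_k ∈ ℝ^m, and let α_l, α_k ∈ (0,∞)^m be fixed strictly positive base steepness vectors. Assume that y_i ≠ μ_{li} and y_i ≠ μ_{ki} for every i = 1, …, m, and that μ_{ki} ≥ μ_{li} for every i = 1, …, m. Then the error Λ(y; μ_l, tα_l)·P(y; μ_k, tα_k) − H(y; (μ_l, tα_l), (μ_k, tα_k)) converges to 0 exponentially as the steepness goes to infinity: there exist constants C, c > 0 such that |Λ(y; μ_l, tα_l)·P(y; μ_k, tα_k) − H(y; (μ_l, tα_l), (μ_k, tα_k))| ≤ C·exp(−c·t) for all t ≥ 1. -/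
open MeasureTheory ProbabilityTheory Real

noncomputable def logisticFun (y μ α : ℝ) : ℝ := 1 / (1 + Real.exp (-α * (y - μ)))

noncomputable def rbfFun (y μ α : ℝ) : ℝ :=
  Real.exp (-α * (y - μ)) / (1 + Real.exp (-α * (y - μ))) ^ 2

noncomputable def conjLog {m : ℕ} (y μ α : Fin m → ℝ) : ℝ :=
  ∏ i, logisticFun (y i) (μ i) (α i)

noncomputable def conjRBF {m : ℕ} (y μ α : Fin m → ℝ) : ℝ :=
  ∏ i, rbfFun (y i) (μ i) (α i)

open scoped Classical in
/-- Decision function `H(y; (μl, αl), (μk, αk))`. -/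
noncomputable def decisionH {m : ℕ} (y μl αl μk αk : Fin m → ℝ) : ℝ :=
  if ∀ i, μl i < μk i then conjRBF y μk αk else 0

lemma logistic_nonneg (y μ α : ℝ) : 0 ≤ logisticFun y μ α := by
  unfold logisticFun; positivity

lemma logistic_le_one (y μ α : ℝ) : logisticFun y μ α ≤ 1 := by
  unfold logisticFun
  rw [div_le_one (by positivity)]
  linarith [Real.exp_pos (-α * (y - μ))]

lemma rbf_nonneg (y μ α : ℝ) : 0 ≤ rbfFun y μ α := by
  unfold rbfFun; positivity

lemma rbf_le_one (y μ α : ℝ) : rbfFun y μ α ≤ 1 := by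
  unfold rbfFun
  rw [div_le_one (by positivity)]
  nlinarith [Real.exp_pos (-α * (y - μ))]

lemma rbf_le_exp_neg_abs (y μ α : ℝ) : rbfFun y μ α ≤ Real.exp (-|α * (y - μ)|) := by
  unfold rbfFun
  rw [show -α * (y - μ) = -(α * (y - μ)) by ring]
  set x := α * (y - μ) with hx
  have he : 0 < Real.exp (-x) := Real.exp_pos _
  rcases abs_cases x with ⟨h1, h2⟩ | ⟨h1, h2⟩
  · rw [h1, div_le_iff₀ (by positivity)]
    nlinarith [mul_pos he he, mul_pos (mul_pos he he) he]
  · rw [h1, neg_neg, div_le_iff₀ (by positivity)]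
    have hinv : Real.exp x * Real.exp (-x) = 1 := by
      rw [← Real.exp_add]; simp
    nlinarith [Real.exp_pos x]

theorem logistic_mul_rbf_sub_H_exp_decay
    (m : ℕ) (hm : 0 < m) (y μl μk αl αk : Fin m → ℝ)
    (hαl : ∀ i, 0 < αl i) (hαk : ∀ i, 0 < αk i)
    (hyl : ∀ i, y i ≠ μl i) (hyk : ∀ i, y i ≠ μk i)
    (hcenter : ∀ i, μl i ≤ μk i) :
    ∃ C c : ℝ, 0 < C ∧ 0 < c ∧ ∀ t : ℝ, 1 ≤ t →
      |conjLog y μl (fun i => t * αl i) * conjRBF y μk (fun i => t * αk i)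
          - decisionH y μl (fun i => t * αl i) μk (fun i => t * αk i)|
        ≤ C * Real.exp (-c * t) := by
  have hne : (Finset.univ : Finset (Fin m)).Nonempty := ⟨⟨0, hm⟩, Finset.mem_univ _⟩
  set f : Fin m → ℝ := fun i => αk i * |y i - μk i| with hf
  set c := Finset.univ.inf' hne f with hcdef
  have hcpos : 0 < c := by
    rw [hcdef, Finset.lt_inf'_iff]
    intro i _
    have hne' : y i - μk i ≠ 0 := sub_ne_zero.mpr (hyk i)
    have := hαk i
    simp only [hf]
    positivity
  refine ⟨1, c, one_pos, hcpos, ?_⟩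
  intro t ht
  have ht0 : 0 < t := lt_of_lt_of_le one_pos ht
  set L := conjLog y μl (fun i => t * αl i) with hL
  set P := conjRBF y μk (fun i => t * αk i) with hP
  have hL0 : 0 ≤ L := Finset.prod_nonneg fun i _ => logistic_nonneg _ _ _
  have hL1 : L ≤ 1 :=
    Finset.prod_le_one (fun i _ => logistic_nonneg _ _ _) (fun i _ => logistic_le_one _ _ _)
  have hP0 : 0 ≤ P := Finset.prod_nonneg fun i _ => rbf_nonneg _ _ _
  obtain ⟨i0, _⟩ := hne
  have hPle : P ≤ Real.exp (-c * t) := by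
    have h1 : P ≤ rbfFun (y i0) (μk i0) (t * αk i0) := by
      rw [hP]
      unfold conjRBF
      rw [← Finset.mul_prod_erase Finset.univ _ (Finset.mem_univ i0)]
      calc rbfFun (y i0) (μk i0) (t * αk i0) *
            ∏ i ∈ Finset.univ.erase i0, rbfFun (y i) (μk i) (t * αk i)
          ≤ rbfFun (y i0) (μk i0) (t * αk i0) * 1 := by
            apply mul_le_mul_of_nonneg_left _ (rbf_nonneg _ _ _)
            exact Finset.prod_le_one (fun i _ => rbf_nonneg _ _ _)
              (fun i _ => rbf_le_one _ _ _)
        _ = rbfFun (y i0) (μk i0) (t * αk i0) := mul_one _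
    have h2 : rbfFun (y i0) (μk i0) (t * αk i0) ≤ Real.exp (-c * t) := by
      refine le_trans (rbf_le_exp_neg_abs _ _ _) (Real.exp_le_exp.mpr ?_)
      have hci : c ≤ f i0 := Finset.inf'_le f (Finset.mem_univ i0)
      have habs : |t * αk i0 * (y i0 - μk i0)| = t * f i0 := by
        rw [hf, abs_mul, abs_of_pos (mul_pos ht0 (hαk i0)), mul_assoc]
      rw [habs]
      nlinarith
    exact h1.trans h2
  rw [one_mul]
  unfold decisionH
  split_ifs with h
  · have hHP : conjRBF y μk (fun i => t * αk i) = P := rfl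
    rw [hHP, abs_sub_comm, abs_of_nonneg (by nlinarith : (0:ℝ) ≤ P - L * P)]
    nlinarith
  · rw [sub_zero, abs_of_nonneg (mul_nonneg hL0 hP0)]
    nlinarith
end

section
/- Let m be a positive integer, let μ_l, μ_k ∈ ℝ^m with μ_l ≠ μ_k (i.e., there exists an index i with μ_{li} ≠ μ_{ki}), and let α_l, α_k ∈ (0,∞)^m be fixed strictly positive base steepness vectors. Then for every y ∈ ℝ^m, the product P(y; μ_l, tα_l)·P(y; μ_k, tα_k) converges to 0 exponentially as the steepness goes to infinity: there exist constants C, c > 0 such that P(y; μ_l, tα_l)·P(y; μ_k, tα_k) ≤ C·exp(−c·t) for all t ≥ 1. -/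
open MeasureTheory ProbabilityTheory Real

lemma conjRBF_le_single {m : ℕ} (y μ α : Fin m → ℝ) (i : Fin m) :
    conjRBF y μ α ≤ rbfFun (y i) (μ i) (α i) := by
  unfold conjRBF
  rw [← Finset.mul_prod_erase Finset.univ _ (Finset.mem_univ i)]
  have h1 : ∏ j ∈ Finset.univ.erase i, rbfFun (y j) (μ j) (α j) ≤ 1 :=
    Finset.prod_le_one (fun j _ => rbf_nonneg _ _ _) (fun j _ => rbf_le_one _ _ _)
  nlinarith [rbf_nonneg (y i) (μ i) (α i),
    Finset.prod_nonneg (fun j (_ : j ∈ Finset.univ.erase i) => rbf_nonneg (y j) (μ j) (α j))]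

lemma conjRBF_nonneg {m : ℕ} (y μ α : Fin m → ℝ) : 0 ≤ conjRBF y μ α :=
  Finset.prod_nonneg (fun j _ => rbf_nonneg _ _ _)

lemma conjRBF_le_one {m : ℕ} (y μ α : Fin m → ℝ) : conjRBF y μ α ≤ 1 :=
  Finset.prod_le_one (fun j _ => rbf_nonneg _ _ _) (fun j _ => rbf_le_one _ _ _)

theorem rbf_mul_rbf_exp_decay_of_center_ne
    (m : ℕ) (hm : 0 < m) (μl μk αl αk : Fin m → ℝ)
    (hμ : μl ≠ μk)
    (hαl : ∀ i, 0 < αl i) (hαk : ∀ i, 0 < αk i) :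
    ∀ y : Fin m → ℝ, ∃ C c : ℝ, 0 < C ∧ 0 < c ∧ ∀ t : ℝ, 1 ≤ t →
      conjRBF y μl (fun i => t * αl i) * conjRBF y μk (fun i => t * αk i)
        ≤ C * Real.exp (-c * t) := by
  intro y
  obtain ⟨i, hi⟩ := Function.ne_iff.mp hμ
  -- Choose the center (μl or μk) that differs from y i
  have key : ∃ (μ α : Fin m → ℝ), (0 < α i) ∧ y i ≠ μ i ∧
      ∀ t : ℝ, 1 ≤ t →
        conjRBF y μl (fun j => t * αl j) * conjRBF y μk (fun j => t * αk j)
          ≤ rbfFun (y i) (μ i) (t * α i) := by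
    rcases ne_or_eq (y i) (μl i) with hy | hy
    · refine ⟨μl, αl, hαl i, hy, fun t ht => ?_⟩
      calc conjRBF y μl (fun j => t * αl j) * conjRBF y μk (fun j => t * αk j)
          ≤ conjRBF y μl (fun j => t * αl j) * 1 := by
            exact mul_le_mul_of_nonneg_left (conjRBF_le_one _ _ _) (conjRBF_nonneg _ _ _)
        _ = conjRBF y μl (fun j => t * αl j) := mul_one _
        _ ≤ rbfFun (y i) (μl i) (t * αl i) := conjRBF_le_single _ _ _ i
    · have hy' : y i ≠ μk i := by rw [hy]; exact hi
      refine ⟨μk, αk, hαk i, hy', fun t ht => ?_⟩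
      calc conjRBF y μl (fun j => t * αl j) * conjRBF y μk (fun j => t * αk j)
          ≤ 1 * conjRBF y μk (fun j => t * αk j) := by
            exact mul_le_mul_of_nonneg_right (conjRBF_le_one _ _ _) (conjRBF_nonneg _ _ _)
        _ = conjRBF y μk (fun j => t * αk j) := one_mul _
        _ ≤ rbfFun (y i) (μk i) (t * αk i) := conjRBF_le_single _ _ _ i
  obtain ⟨μ, α, hα, hy, hbound⟩ := key
  refine ⟨1, α i * |y i - μ i|, one_pos, mul_pos hα (abs_pos.mpr (sub_ne_zero.mpr hy)), fun t ht => ?_⟩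
  have ht0 : 0 < t := lt_of_lt_of_le one_pos ht
  calc conjRBF y μl (fun j => t * αl j) * conjRBF y μk (fun j => t * αk j)
      ≤ rbfFun (y i) (μ i) (t * α i) := hbound t ht
    _ ≤ Real.exp (-|t * α i * (y i - μ i)|) := rbf_le_exp_neg_abs _ _ _
    _ = 1 * Real.exp (-(α i * |y i - μ i|) * t) := by
        rw [one_mul]
        congr 1
        rw [abs_mul, abs_mul, abs_of_pos ht0, abs_of_pos hα]
        ring
end

section
/- Let m be a positive integer, let y, μ_l, μ_j ∈ ℝ^m, and let α_l, α_j ∈ (0,∞)^m be fixed strictly positive base steepness vectors. Assume that y_i ≠ μ_{li} and y_i ≠ μ_{ji} for every i = 1, …, m. Define the componentwise-maximum parameters μ*_i := max(μ_{li}, μ_{ji}) and α*_i := α_{li} if μ_{li} ≥ μ_{ji} and α*_i := α_{ji} otherwise. Then the product of the two conjunctive logistic functions satisfies: Λ(y; μ_l, tα_l)·Λ(y; μ_j, tα_j) − Λ(y; μ*, tα*) converges to 0 exponentially as the steepness goes to infinity, i.e., there exist constants C, c > 0 such that |Λ(y; μ_l, tα_l)·Λ(y; μ_j, tα_j) − Λ(y;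 μ*, tα*)| ≤ C·exp(−c·t) for all t ≥ 1. -/
open MeasureTheory ProbabilityTheory Real

lemma logistic_near_ind (y μ α t : ℝ) (hα : 0 < α) (hy : y ≠ μ) (ht : 0 ≤ t) :
    |logisticFun y μ (t * α) - (if μ < y then 1 else 0)| ≤
      Real.exp (-(t * (α * |y - μ|))) := by
  rcases lt_or_gt_of_ne hy with h | h
  · -- y < μ, indicator is 0
    rw [if_neg (not_lt.2 h.le)]
    have hE : (1:ℝ) ≤ Real.exp (-(t*α) * (y - μ)) := by
      apply Real.one_le_exp
      have : -(t*α) * (y - μ) = t * α * (μ - y) := by ring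
      rw [this]
      have : 0 ≤ μ - y := by linarith
      positivity
    unfold logisticFun
    rw [sub_zero, abs_of_nonneg (by positivity)]
    have h1 : 1 / (1 + Real.exp (-(t*α) * (y - μ))) ≤ 1 / Real.exp (-(t*α) * (y - μ)) := by
      apply one_div_le_one_div_of_le (by positivity)
      nlinarith
    calc 1 / (1 + Real.exp (-(t*α) * (y - μ))) ≤ 1 / Real.exp (-(t*α) * (y - μ)) := h1
      _ = Real.exp (-(-(t*α) * (y - μ))) := by rw [Real.exp_neg, one_div]
      _ = Real.exp (-(t * (α * |y - μ|))) := by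
          rw [abs_of_nonpos (by linarith)]; ring_nf
  · -- μ < y, indicator is 1
    rw [if_pos h]
    set E := Real.exp (-(t*α) * (y - μ)) with hEdef
    have hE0 : 0 < E := Real.exp_pos _
    unfold logisticFun
    have key : 1 / (1 + E) - 1 = -(E / (1 + E)) := by
      field_simp
      ring
    rw [← hEdef, key, abs_neg, abs_of_nonneg (by positivity)]
    calc E / (1 + E) ≤ E / 1 := by
          apply div_le_div_of_nonneg_left hE0.le one_pos; linarith
      _ = E := div_one E
      _ = Real.exp (-(t * (α * |y - μ|))) := by
          rw [hEdef, abs_of_pos (by linarith)]; ring_nf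

lemma abs_prod_sub_prod_le {ι : Type*} (s : Finset ι) (a b : ι → ℝ) (ε : ℝ) (hε : 0 ≤ ε)
    (ha : ∀ i ∈ s, |a i| ≤ 1) (hb : ∀ i ∈ s, |b i| ≤ 1)
    (hab : ∀ i ∈ s, |a i - b i| ≤ ε) :
    |∏ i ∈ s, a i - ∏ i ∈ s, b i| ≤ s.card * ε := by
  classical
  induction s using Finset.induction with
  | empty => simp
  | @insert j s hj ih =>
    rw [Finset.prod_insert hj, Finset.prod_insert hj, Finset.card_insert_of_notMem hj]
    have hPa : |∏ i ∈ s, a i| ≤ 1 := by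
      rw [Finset.abs_prod]
      exact Finset.prod_le_one (fun i _ => abs_nonneg _)
        (fun i hi => ha i (Finset.mem_insert_of_mem hi))
    have hIH := ih (fun i hi => ha i (Finset.mem_insert_of_mem hi))
      (fun i hi => hb i (Finset.mem_insert_of_mem hi))
      (fun i hi => hab i (Finset.mem_insert_of_mem hi))
    have hbj : |b j| ≤ 1 := hb j (Finset.mem_insert_self j s)
    have habj : |a j - b j| ≤ ε := hab j (Finset.mem_insert_self j s)
    have expand : a j * ∏ i ∈ s, a i - b j * ∏ i ∈ s, b i
        = (a j - b j) * ∏ i ∈ s, a i + b j * (∏ i ∈ s, a i - ∏ i ∈ s, b i) := by ring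
    rw [expand]
    calc |(a j - b j) * ∏ i ∈ s, a i + b j * (∏ i ∈ s, a i - ∏ i ∈ s, b i)|
        ≤ |(a j - b j) * ∏ i ∈ s, a i| + |b j * (∏ i ∈ s, a i - ∏ i ∈ s, b i)| := abs_add_le _ _
      _ ≤ ε * 1 + 1 * (s.card * ε) := by
          rw [abs_mul, abs_mul]
          have e1 : |a j - b j| * |∏ i ∈ s, a i| ≤ ε * 1 :=
            mul_le_mul habj hPa (abs_nonneg _) hε
          have e2 : |b j| * |∏ i ∈ s, a i - ∏ i ∈ s, b i| ≤ 1 * (s.card * ε) :=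
            mul_le_mul hbj hIH (abs_nonneg _) zero_le_one
          linarith
      _ = (s.card + 1) * ε := by ring
      _ = (↑(s.card + 1)) * ε := by push_cast; ring

theorem logistic_mul_logistic_sub_logistic_max_exp_decay
    (m : ℕ) (hm : 0 < m) (y μl μj αl αj : Fin m → ℝ)
    (hαl : ∀ i, 0 < αl i) (hαj : ∀ i, 0 < αj i)
    (hyl : ∀ i, y i ≠ μl i) (hyj : ∀ i, y i ≠ μj i) :
    ∃ C c : ℝ, 0 < C ∧ 0 < c ∧ ∀ t : ℝ, 1 ≤ t →
      |conjLog y μl (fun i => t * αl i) * conjLog y μj (fun i => t * αj i)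
          - conjLog y (fun i => max (μl i) (μj i))
              (fun i => t * (if μj i ≤ μl i then αl i else αj i))|
        ≤ C * Real.exp (-c * t) := by
  classical
  have hne : (Finset.univ : Finset (Fin m)).Nonempty := by
    haveI : Nonempty (Fin m) := Fin.pos_iff_nonempty.mp hm
    exact Finset.univ_nonempty
  set f : Fin m → ℝ := fun i => min (αl i * |y i - μl i|) (αj i * |y i - μj i|) with hf
  set c := Finset.univ.inf' hne f with hcdef
  have hdl : ∀ i, 0 < |y i - μl i| := fun i => abs_pos.2 (sub_ne_zero.2 (hyl i))
  have hdj : ∀ i, 0 < |y i - μj i| := fun i => abs_pos.2 (sub_ne_zero.2 (hyj i))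
  have hc : 0 < c := by
    rw [hcdef, Finset.lt_inf'_iff]
    exact fun i _ => lt_min (mul_pos (hαl i) (hdl i)) (mul_pos (hαj i) (hdj i))
  have hcl : ∀ i, c ≤ αl i * |y i - μl i| := fun i =>
    le_trans (Finset.inf'_le f (Finset.mem_univ i)) (min_le_left _ _)
  have hcj : ∀ i, c ≤ αj i * |y i - μj i| := fun i =>
    le_trans (Finset.inf'_le f (Finset.mem_univ i)) (min_le_right _ _)
  refine ⟨3 * m, c, by positivity, hc, ?_⟩
  intro t ht
  have ht0 : (0:ℝ) ≤ t := by linarith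
  set e := Real.exp (-c * t) with hedef
  have he0 : 0 ≤ e := Real.exp_nonneg _
  have key : ∀ a : ℝ, c ≤ a → Real.exp (-(t * a)) ≤ e := by
    intro a ha
    rw [hedef]
    apply Real.exp_le_exp.2
    nlinarith
  -- indicator product
  set P : ℝ := ∏ i, (if max (μl i) (μj i) < y i then (1:ℝ) else 0) with hP
  set A : Fin m → ℝ := fun i =>
    logisticFun (y i) (μl i) (t * αl i) * logisticFun (y i) (μj i) (t * αj i) with hA
  set B : Fin m → ℝ := fun i => if max (μl i) (μj i) < y i then (1:ℝ) else 0 with hB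
  have hBsplit : ∀ i, B i = (if μl i < y i then (1:ℝ) else 0) * (if μj i < y i then (1:ℝ) else 0) := by
    intro i
    simp only [hB, max_lt_iff]
    split_ifs with h1 h2 h3 <;> ring_nf <;> tauto
  have hBabs : ∀ i, |B i| ≤ 1 := by
    intro i; simp only [hB]; split_ifs <;> simp
  have hAabs : ∀ i, |A i| ≤ 1 := by
    intro i
    rw [hA, abs_mul]
    have := logistic_nonneg (y i) (μl i) (t * αl i)
    have := logistic_le_one (y i) (μl i) (t * αl i)
    have := logistic_nonneg (y i) (μj i) (t * αj i)
    have := logistic_le_one (y i) (μj i) (t * αj i)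
    rw [abs_of_nonneg (by assumption), abs_of_nonneg (by assumption)]
    nlinarith
  have hABi : ∀ i, |A i - B i| ≤ 2 * e := by
    intro i
    have hl := logistic_near_ind (y i) (μl i) (αl i) t (hαl i) (hyl i) ht0
    have hj' := logistic_near_ind (y i) (μj i) (αj i) t (hαj i) (hyj i) ht0
    have hl' : |logisticFun (y i) (μl i) (t * αl i) - (if μl i < y i then 1 else 0)| ≤ e :=
      le_trans hl (key _ (hcl i))
    have hj'' : |logisticFun (y i) (μj i) (t * αj i) - (if μj i < y i then 1 else 0)| ≤ e :=
      le_trans hj' (key _ (hcj i))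
    rw [hA, hBsplit i]
    set u := logisticFun (y i) (μl i) (t * αl i)
    set v := logisticFun (y i) (μj i) (t * αj i)
    set p : ℝ := if μl i < y i then 1 else 0
    set q : ℝ := if μj i < y i then 1 else 0
    have hv : |v| ≤ 1 := by
      rw [abs_of_nonneg (logistic_nonneg _ _ _)]; exact logistic_le_one _ _ _
    have hp : |p| ≤ 1 := by simp only [p]; split_ifs <;> simp
    have expand : u * v - p * q = (u - p) * v + p * (v - q) := by ring
    calc |u * v - p * q| = |(u - p) * v + p * (v - q)| := by rw [expand]
      _ ≤ |(u - p) * v| + |p * (v - q)| := abs_add_le _ _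
      _ ≤ e * 1 + 1 * e := by
          rw [abs_mul, abs_mul]
          have e1 : |u - p| * |v| ≤ e * 1 := mul_le_mul hl' hv (abs_nonneg _) he0
          have e2 : |p| * |v - q| ≤ 1 * e := mul_le_mul hp hj'' (abs_nonneg _) zero_le_one
          linarith
      _ = 2 * e := by ring
  -- Step A
  have stepA : |(∏ i, A i) - P| ≤ m * (2 * e) := by
    have := abs_prod_sub_prod_le Finset.univ A B (2 * e) (by positivity)
      (fun i _ => hAabs i) (fun i _ => hBabs i) (fun i _ => hABi i)
    simpa using this
  -- Step B
  set Mf : Fin m → ℝ := fun i =>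
    logisticFun (y i) (max (μl i) (μj i)) (t * (if μj i ≤ μl i then αl i else αj i)) with hMf
  have hMabs : ∀ i, |Mf i| ≤ 1 := by
    intro i
    rw [abs_of_nonneg (logistic_nonneg _ _ _)]; exact logistic_le_one _ _ _
  have hMBi : ∀ i, |Mf i - B i| ≤ e := by
    intro i
    by_cases h : μj i ≤ μl i
    · have hmax : max (μl i) (μj i) = μl i := max_eq_left h
      simp only [hMf, hB, hmax, if_pos h]
      exact le_trans (logistic_near_ind (y i) (μl i) (αl i) t (hαl i) (hyl i) ht0)
        (key _ (hcl i))
    · have hmax : max (μl i) (μj i) = μj i := max_eq_right (le_of_not_ge h)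
      simp only [hMf, hB, hmax, if_neg h]
      exact le_trans (logistic_near_ind (y i) (μj i) (αj i) t (hαj i) (hyj i) ht0)
        (key _ (hcj i))
  have stepB : |(∏ i, Mf i) - P| ≤ m * e := by
    have := abs_prod_sub_prod_le Finset.univ Mf B e he0
      (fun i _ => hMabs i) (fun i _ => hBabs i) (fun i _ => hMBi i)
    simpa using this
  -- assemble
  have hprod : conjLog y μl (fun i => t * αl i) * conjLog y μj (fun i => t * αj i)
      = ∏ i, A i := by
    rw [conjLog, conjLog, ← Finset.prod_mul_distrib]
  have hM : conjLog y (fun i => max (μl i) (μj i))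
      (fun i => t * (if μj i ≤ μl i then αl i else αj i)) = ∏ i, Mf i := rfl
  rw [hprod, hM]
  calc |(∏ i, A i) - ∏ i, Mf i|
      ≤ |(∏ i, A i) - P| + |P - ∏ i, Mf i| := abs_sub_le _ _ _
    _ ≤ m * (2 * e) + m * e := by rw [abs_sub_comm P]; linarith
    _ = 3 * m * e := by ring
end

section
/- Let m, N_L, N_R be positive integers, let w ∈ ℝ^{m×(N_L+N_R)} be a fixed weight matrix, let μ_1, …, μ_{N_L+N_R} ∈ ℝ^m be centers, let α_1, …, α_{N_L+N_R} ∈ (0,∞)^m be fixed strictly positive base steepness vectors, fix l ∈ {1, …, N_L}, and let y ∈ ℝ^m satisfy y_i ≠ μ_{ji} for every i = 1, …, m and every j = 1, …, N_L+N_R. For t > 0 define the vector field F^t: ℝ^m → ℝ^m by F^t_i(z) := Σ_{j=1}^{N_L} w_{ij} Λ(z; μ_j, tα_j) + Σ_{k=N_L+1}^{N_L+N_R} w_{ik} P(z; μ_k, tα_k), and for each j ≤ N_L define μ*_{lj,i} := max(μ_{li}, μ_{ji}) with α*_{lj,i} := α_{li} if μ_{li} ≥ μ_{ji} and α*_{lj,i}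 := α_{ji} otherwise. Then the Lie derivative of the conjunctive logistic function, ∇_y Λ(y; μ_l, tα_l) · F^t(y), minus the nonlinear combination Σ_{i=1}^m Σ_{j=1}^{N_L} tα_{li} w_{ij} (1 − λ(y_i; μ_{li}, tα_{li})) Λ(y; μ*_{lj}, tα*_{lj}) + Σ_{i=1}^m Σ_{k=N_L+1}^{N_L+N_R} tα_{li} w_{ik} (1 − λ(y_i; μ_{li}, tα_{li})) H(y; (μ_l, tα_l), (μ_k, tα_k)), converges to 0 exponentially as t → ∞: there exist constants C, c > 0 such that the absolute value of this difference is at most C·exp(−c·t) for all t ≥ 1. -/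
open MeasureTheory ProbabilityTheory Real

lemma logistic_pos (y μ α : ℝ) : 0 < logisticFun y μ α := by
  unfold logisticFun; positivity

lemma one_sub_logistic_le (y μ α : ℝ) : 1 - logisticFun y μ α ≤ Real.exp (-α * (y - μ)) := by
  unfold logisticFun
  have h := Real.exp_pos (-α * (y - μ))
  have h2 : 1 - 1 / (1 + Real.exp (-α * (y - μ)))
      = Real.exp (-α * (y - μ)) / (1 + Real.exp (-α * (y - μ))) := by
    field_simp
    ring
  rw [h2]
  exact div_le_self h.le (by linarith)

lemma logistic_le_exp (y μ α : ℝ) : logisticFun y μ α ≤ Real.exp (α * (y - μ)) := by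
  unfold logisticFun
  have h := Real.exp_pos (-α * (y - μ))
  have hmul : Real.exp (-α * (y - μ)) * Real.exp (α * (y - μ)) = 1 := by
    rw [← Real.exp_add]; ring_nf; exact Real.exp_zero
  rw [div_le_iff₀ (by positivity)]
  nlinarith [Real.exp_pos (α * (y - μ))]

lemma hasDerivAt_logistic (μ α u : ℝ) :
    HasDerivAt (fun x => logisticFun x μ α)
      (α * (1 - logisticFun u μ α) * logisticFun u μ α) u := by
  have h1 : HasDerivAt (fun x : ℝ => -α * (x - μ)) (-α) u := by
    simpa using ((hasDerivAt_id u).sub_const μ).const_mul (-α)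
  have h3 : HasDerivAt (fun x => 1 + Real.exp (-α * (x - μ)))
      (-α * Real.exp (-α * (u - μ))) u := by
    simpa [mul_comm] using (h1.exp.const_add 1)
  have hne : (1 + Real.exp (-α * (u - μ))) ≠ 0 := by positivity
  have h4 := h3.inv hne
  have : (fun x => logisticFun x μ α) = fun x => (1 + Real.exp (-α * (x - μ)))⁻¹ := by
    funext x; simp [logisticFun, one_div]
  rw [this]
  have hval : α * (1 - logisticFun u μ α) * logisticFun u μ α
      = -(-α * Real.exp (-α * (u - μ))) / (1 + Real.exp (-α * (u - μ))) ^ 2 := by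
    have h := Real.exp_pos (-α * (u - μ))
    unfold logisticFun
    rw [eq_div_iff (by positivity)]
    field_simp
    ring_nf
  rw [hval]
  exact h4

lemma rbf_le_exp_neg (y μ α : ℝ) : rbfFun y μ α ≤ Real.exp (-α * (y - μ)) := by
  unfold rbfFun
  refine div_le_self (Real.exp_pos _).le ?_
  nlinarith [Real.exp_pos (-α * (y - μ)), sq_nonneg (Real.exp (-α * (y - μ)))]

lemma rbf_le_exp_pos (y μ α : ℝ) : rbfFun y μ α ≤ Real.exp (α * (y - μ)) := by
  unfold rbfFun
  have h := Real.exp_pos (-α * (y - μ))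
  have hmul : Real.exp (-α * (y - μ)) * Real.exp (α * (y - μ)) = 1 := by
    rw [← Real.exp_add]; ring_nf; exact Real.exp_zero
  rw [div_le_iff₀ (by positivity)]
  nlinarith [Real.exp_pos (α * (y - μ))]

lemma rbf_le_abs (y μ α : ℝ) (hα : 0 ≤ α) : rbfFun y μ α ≤ Real.exp (-(α * |y - μ|)) := by
  rcases abs_cases (y - μ) with ⟨h1, _⟩ | ⟨h1, _⟩
  · rw [h1]
    calc rbfFun y μ α ≤ Real.exp (-α * (y - μ)) := rbf_le_exp_neg y μ α
    _ = Real.exp (-(α * (y - μ))) := by ring_nf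
  · rw [h1]
    calc rbfFun y μ α ≤ Real.exp (α * (y - μ)) := rbf_le_exp_pos y μ α
    _ = Real.exp (-(α * -(y - μ))) := by ring_nf

/-- product difference bound for [0,1]-valued functions -/
lemma abs_prod_sub_prod_le_s5 {ι : Type*} (s : Finset ι) (f g : ι → ℝ)
    (hf0 : ∀ i, 0 ≤ f i) (hf1 : ∀ i, f i ≤ 1) (hg0 : ∀ i, 0 ≤ g i) (hg1 : ∀ i, g i ≤ 1) :
    |∏ i ∈ s, f i - ∏ i ∈ s, g i| ≤ ∑ i ∈ s, |f i - g i| := by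
  classical
  induction s using Finset.induction_on with
  | empty => simp
  | insert _ _ ha ih =>
    rename_i a s
    rw [Finset.prod_insert ha, Finset.prod_insert ha, Finset.sum_insert ha]
    have key : f a * ∏ i ∈ s, f i - g a * ∏ i ∈ s, g i
        = f a * (∏ i ∈ s, f i - ∏ i ∈ s, g i) + (f a - g a) * ∏ i ∈ s, g i := by ring
    rw [key]
    have h1 : |f a * (∏ i ∈ s, f i - ∏ i ∈ s, g i)| ≤ |∏ i ∈ s, f i - ∏ i ∈ s, g i| := by
      rw [abs_mul]
      have : |f a| ≤ 1 := abs_le.mpr ⟨by linarith [hf0 a], hf1 a⟩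
      nlinarith [abs_nonneg (∏ i ∈ s, f i - ∏ i ∈ s, g i)]
    have h2 : |(f a - g a) * ∏ i ∈ s, g i| ≤ |f a - g a| := by
      rw [abs_mul]
      have hp0 : (0:ℝ) ≤ ∏ i ∈ s, g i := Finset.prod_nonneg fun i _ => hg0 i
      have hp1 : ∏ i ∈ s, g i ≤ 1 := Finset.prod_le_one (fun i _ => hg0 i) fun i _ => hg1 i
      have : |∏ i ∈ s, g i| ≤ 1 := abs_le.mpr ⟨by linarith, hp1⟩
      nlinarith [abs_nonneg (f a - g a)]
    calc |f a * (∏ i ∈ s, f i - ∏ i ∈ s, g i) + (f a - g a) * ∏ i ∈ s, g i|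
        ≤ |f a * (∏ i ∈ s, f i - ∏ i ∈ s, g i)| + |(f a - g a) * ∏ i ∈ s, g i| := abs_add_le _ _
      _ ≤ |∏ i ∈ s, f i - ∏ i ∈ s, g i| + |f a - g a| := add_le_add h1 h2
      _ ≤ (∑ i ∈ s, |f i - g i|) + |f a - g a| := by linarith [ih]
      _ = |f a - g a| + ∑ i ∈ s, |f i - g i| := by ring

lemma coord_L (y μ1 μ2 α1 α2 t b : ℝ) (hα1 : 0 < α1) (hα2 : 0 < α2)
    (h1 : y ≠ μ1) (h2 : y ≠ μ2) (hb1 : b ≤ α1 * |y - μ1|) (hb2 : b ≤ α2 * |y - μ2|)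
    (ht : 0 < t) :
    |logisticFun y μ1 (t * α1) * logisticFun y μ2 (t * α2)
      - logisticFun y (max μ1 μ2) (t * (if μ2 ≤ μ1 then α1 else α2))| ≤ Real.exp (-(b * t)) := by
  by_cases hc : μ2 ≤ μ1
  · rw [if_pos hc, max_eq_left hc]
    have key : logisticFun y μ1 (t * α1) * logisticFun y μ2 (t * α2) - logisticFun y μ1 (t * α1)
        = logisticFun y μ1 (t * α1) * (logisticFun y μ2 (t * α2) - 1) := by ring
    rw [key, abs_mul, abs_of_pos (logistic_pos _ _ _),
      abs_of_nonpos (by linarith [logistic_le_one y μ2 (t * α2)])]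
    rcases lt_or_gt_of_ne h2 with hy2 | hy2
    · -- y < μ2 ≤ μ1, bound λ1
      have hy1 : y < μ1 := lt_of_lt_of_le hy2 hc
      have hl1 : logisticFun y μ1 (t * α1) ≤ Real.exp (-(b * t)) := by
        calc logisticFun y μ1 (t * α1) ≤ Real.exp (t * α1 * (y - μ1)) := logistic_le_exp _ _ _
          _ ≤ Real.exp (-(b * t)) := by
            apply Real.exp_le_exp.mpr
            have habs : |y - μ1| = μ1 - y := by rw [abs_of_neg (by linarith)]; ring
            rw [habs] at hb1
            nlinarith
      have h2' : -(logisticFun y μ2 (t * α2) - 1) ≤ 1 := by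
        linarith [logistic_pos y μ2 (t * α2)]
      nlinarith [logistic_pos y μ1 (t * α1), logistic_le_one y μ2 (t * α2),
        logistic_pos y μ2 (t * α2)]
    · -- y > μ2, bound 1 - λ2
      have hl2 : -(logisticFun y μ2 (t * α2) - 1) ≤ Real.exp (-(b * t)) := by
        have := one_sub_logistic_le y μ2 (t * α2)
        calc -(logisticFun y μ2 (t * α2) - 1) = 1 - logisticFun y μ2 (t * α2) := by ring
          _ ≤ Real.exp (-(t * α2) * (y - μ2)) := one_sub_logistic_le _ _ _
          _ ≤ Real.exp (-(b * t)) := by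
            apply Real.exp_le_exp.mpr
            have habs : |y - μ2| = y - μ2 := abs_of_pos (by linarith)
            rw [habs] at hb2
            nlinarith
      nlinarith [logistic_pos y μ1 (t * α1), logistic_le_one y μ1 (t * α1),
        logistic_pos y μ2 (t * α2), logistic_le_one y μ2 (t * α2), Real.exp_pos (-(b * t))]
  · push_neg at hc
    rw [if_neg (not_le.mpr hc), max_eq_right hc.le]
    have key : logisticFun y μ1 (t * α1) * logisticFun y μ2 (t * α2) - logisticFun y μ2 (t * α2)
        = logisticFun y μ2 (t * α2) * (logisticFun y μ1 (t * α1) - 1) := by ring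
    rw [key, abs_mul, abs_of_pos (logistic_pos _ _ _),
      abs_of_nonpos (by linarith [logistic_le_one y μ1 (t * α1)])]
    rcases lt_or_gt_of_ne h1 with hy1 | hy1
    · have hl2 : logisticFun y μ2 (t * α2) ≤ Real.exp (-(b * t)) := by
        calc logisticFun y μ2 (t * α2) ≤ Real.exp (t * α2 * (y - μ2)) := logistic_le_exp _ _ _
          _ ≤ Real.exp (-(b * t)) := by
            apply Real.exp_le_exp.mpr
            have habs : |y - μ2| = μ2 - y := by rw [abs_of_neg (by nlinarith)]; ring
            rw [habs] at hb2
            nlinarith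
      nlinarith [logistic_pos y μ2 (t * α2), logistic_le_one y μ1 (t * α1),
        logistic_pos y μ1 (t * α1)]
    · have hl1 : -(logisticFun y μ1 (t * α1) - 1) ≤ Real.exp (-(b * t)) := by
        calc -(logisticFun y μ1 (t * α1) - 1) = 1 - logisticFun y μ1 (t * α1) := by ring
          _ ≤ Real.exp (-(t * α1) * (y - μ1)) := one_sub_logistic_le _ _ _
          _ ≤ Real.exp (-(b * t)) := by
            apply Real.exp_le_exp.mpr
            have habs : |y - μ1| = y - μ1 := abs_of_pos (by linarith)
            rw [habs] at hb1
            nlinarith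
      nlinarith [logistic_pos y μ2 (t * α2), logistic_le_one y μ2 (t * α2),
        logistic_pos y μ1 (t * α1), logistic_le_one y μ1 (t * α1), Real.exp_pos (-(b * t))]

lemma hasFDerivAt_conjLog {m : ℕ} (μ α y : Fin m → ℝ) :
    HasFDerivAt (fun z : Fin m → ℝ => conjLog z μ α)
      (∑ i, (∏ jj ∈ Finset.univ.erase i, logisticFun (y jj) (μ jj) (α jj)) •
        ((α i * (1 - logisticFun (y i) (μ i) (α i)) * logisticFun (y i) (μ i) (α i)) •
          (ContinuousLinearMap.proj i : (Fin m → ℝ) →L[ℝ] ℝ))) y := by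
  have hg : ∀ i ∈ (Finset.univ : Finset (Fin m)),
      HasFDerivAt (fun z : Fin m → ℝ => logisticFun (z i) (μ i) (α i))
        ((α i * (1 - logisticFun (y i) (μ i) (α i)) * logisticFun (y i) (μ i) (α i)) •
          (ContinuousLinearMap.proj i : (Fin m → ℝ) →L[ℝ] ℝ)) y := by
    intro i _
    have h := (hasDerivAt_logistic (μ i) (α i) (y i)).comp_hasFDerivAt y
      ((ContinuousLinearMap.proj i : (Fin m → ℝ) →L[ℝ] ℝ).hasFDerivAt)
    exact h
  exact HasFDerivAt.finset_prod hg

lemma fderiv_conjLog_apply {m : ℕ} (μ α y v : Fin m → ℝ) :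
    fderiv ℝ (fun z : Fin m → ℝ => conjLog z μ α) y v
      = ∑ i, α i * (1 - logisticFun (y i) (μ i) (α i)) * conjLog y μ α * v i := by
  rw [(hasFDerivAt_conjLog μ α y).fderiv]
  simp only [ContinuousLinearMap.coe_sum', Finset.sum_apply, ContinuousLinearMap.coe_smul',
    Pi.smul_apply, ContinuousLinearMap.proj_apply, smul_eq_mul]
  refine Finset.sum_congr rfl fun i _ => ?_
  rw [show conjLog y μ α = (∏ jj ∈ Finset.univ.erase i, logisticFun (y jj) (μ jj) (α jj))
      * logisticFun (y i) (μ i) (α i) from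
    (Finset.prod_erase_mul Finset.univ _ (Finset.mem_univ i)).symm]
  ring

theorem lie_deriv_conjLog_exp_approx
    (m NL NR : ℕ) (hm : 0 < m) (hNL : 0 < NL) (hNR : 0 < NR)
    (wL : Fin m → Fin NL → ℝ) (wR : Fin m → Fin NR → ℝ)
    (μL : Fin NL → Fin m → ℝ) (μR : Fin NR → Fin m → ℝ)
    (αL : Fin NL → Fin m → ℝ) (αR : Fin NR → Fin m → ℝ)
    (hαL : ∀ j i, 0 < αL j i) (hαR : ∀ k i, 0 < αR k i)
    (l : Fin NL) (y : Fin m → ℝ)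
    (hyL : ∀ i j, y i ≠ μL j i) (hyR : ∀ i k, y i ≠ μR k i) :
    ∃ C c : ℝ, 0 < C ∧ 0 < c ∧ ∀ t : ℝ, 1 ≤ t →
      |fderiv ℝ (fun z : Fin m → ℝ => conjLog z (μL l) (fun i => t * αL l i)) y
          (fun i => (∑ j, wL i j * conjLog y (μL j) (fun i' => t * αL j i'))
            + ∑ k, wR i k * conjRBF y (μR k) (fun i' => t * αR k i'))
        - ((∑ i, ∑ j, t * αL l i * wL i j
              * (1 - logisticFun (y i) (μL l i) (t * αL l i))
              * conjLog y (fun i' => max (μL l i') (μL j i'))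
                  (fun i' => t * (if μL j i' ≤ μL l i' then αL l i' else αL j i')))
          + ∑ i, ∑ k, t * αL l i * wR i k
              * (1 - logisticFun (y i) (μL l i) (t * αL l i))
              * decisionH y (μL l) (fun i' => t * αL l i') (μR k) (fun i' => t * αR k i'))|
      ≤ C * Real.exp (-c * t) := by
  have hm' : Nonempty (Fin m) := ⟨⟨0, hm⟩⟩
  have hNL' : Nonempty (Fin NL) := ⟨⟨0, hNL⟩⟩
  have hNR' : Nonempty (Fin NR) := ⟨⟨0, hNR⟩⟩
  set b1 : ℝ := (Finset.univ : Finset (Fin m × Fin NL)).inf' Finset.univ_nonempty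
    (fun p => αL p.2 p.1 * |y p.1 - μL p.2 p.1|) with hb1def
  set b2 : ℝ := (Finset.univ : Finset (Fin m × Fin NR)).inf' Finset.univ_nonempty
    (fun p => αR p.2 p.1 * |y p.1 - μR p.2 p.1|) with hb2def
  set b : ℝ := min b1 b2 with hbdef
  have hb : 0 < b := by
    refine lt_min ?_ ?_
    · rw [hb1def, Finset.lt_inf'_iff]
      intro p _
      exact mul_pos (hαL p.2 p.1) (abs_pos.mpr (sub_ne_zero.mpr (hyL p.1 p.2)))
    · rw [hb2def, Finset.lt_inf'_iff]
      intro p _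
      exact mul_pos (hαR p.2 p.1) (abs_pos.mpr (sub_ne_zero.mpr (hyR p.1 p.2)))
  have hbL : ∀ i j, b ≤ αL j i * |y i - μL j i| := fun i j =>
    le_trans (min_le_left b1 b2) (Finset.inf'_le _ (Finset.mem_univ (i, j)))
  have hbR : ∀ i k, b ≤ αR k i * |y i - μR k i| := fun i k =>
    le_trans (min_le_right b1 b2) (Finset.inf'_le _ (Finset.mem_univ (i, k)))
  set K : ℝ := (∑ i, ∑ j, αL l i * |wL i j| * m) + (∑ i, ∑ k, αL l i * |wR i k|) with hKdef
  have hK : 0 ≤ K := by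
    rw [hKdef]
    apply add_nonneg <;> refine Finset.sum_nonneg fun i _ => Finset.sum_nonneg fun j _ => ?_
    · have := (hαL l i).le
      positivity
    · have := (hαL l i).le
      positivity
  refine ⟨K * (2 / b) + 1, b / 2,
    by nlinarith [mul_nonneg hK (le_of_lt (div_pos (by norm_num : (0:ℝ) < 2) hb))],
    by linarith, fun t ht => ?_⟩
  have ht0 : (0:ℝ) < t := lt_of_lt_of_le one_pos ht
  have hc0 : ∀ (μ α : Fin m → ℝ), 0 ≤ conjLog y μ α := fun μ α =>
    Finset.prod_nonneg fun i _ => (logistic_pos _ _ _).le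
  have hc1 : ∀ (μ α : Fin m → ℝ), conjLog y μ α ≤ 1 := fun μ α =>
    Finset.prod_le_one (fun i _ => (logistic_pos _ _ _).le) (fun i _ => logistic_le_one _ _ _)
  have hr0 : ∀ (μ α : Fin m → ℝ), 0 ≤ conjRBF y μ α := fun μ α =>
    Finset.prod_nonneg fun i _ => rbf_nonneg _ _ _
  -- per-pair bound, logistic part
  have hL2 : ∀ j : Fin NL,
      |conjLog y (μL l) (fun i' => t * αL l i') * conjLog y (μL j) (fun i' => t * αL j i')
        - conjLog y (fun i' => max (μL l i') (μL j i'))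
            (fun i' => t * (if μL j i' ≤ μL l i' then αL l i' else αL j i'))|
        ≤ m * Real.exp (-(b * t)) := by
    intro j
    simp only [conjLog]
    rw [← Finset.prod_mul_distrib]
    calc |(∏ i', logisticFun (y i') (μL l i') (t * αL l i')
            * logisticFun (y i') (μL j i') (t * αL j i'))
          - ∏ i', logisticFun (y i') (max (μL l i') (μL j i'))
              (t * (if μL j i' ≤ μL l i' then αL l i' else αL j i'))|
        ≤ ∑ i' : Fin m, |logisticFun (y i') (μL l i') (t * αL l i')
            * logisticFun (y i') (μL j i') (t * αL j i')
          - logisticFun (y i') (max (μL l i') (μL j i'))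
              (t * (if μL j i' ≤ μL l i' then αL l i' else αL j i'))| := by
          apply abs_prod_sub_prod_le_s5
          · intro i; exact mul_nonneg (logistic_pos _ _ _).le (logistic_pos _ _ _).le
          · intro i
            exact mul_le_one₀ (logistic_le_one _ _ _) (logistic_pos _ _ _).le
              (logistic_le_one _ _ _)
          · intro i; exact (logistic_pos _ _ _).le
          · intro i; exact logistic_le_one _ _ _
      _ ≤ ∑ _i' : Fin m, Real.exp (-(b * t)) := Finset.sum_le_sum fun i' _ =>
          coord_L (y i') (μL l i') (μL j i') (αL l i') (αL j i') t b (hαL l i') (hαL j i')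
            (hyL i' l) (hyL i' j) (hbL i' l) (hbL i' j) ht0
      _ = m * Real.exp (-(b * t)) := by
          rw [Finset.sum_const, Finset.card_univ, Fintype.card_fin, nsmul_eq_mul]
  -- per-pair bound, RBF part
  have hR2 : ∀ k : Fin NR,
      |conjLog y (μL l) (fun i' => t * αL l i') * conjRBF y (μR k) (fun i' => t * αR k i')
        - decisionH y (μL l) (fun i' => t * αL l i') (μR k) (fun i' => t * αR k i')|
        ≤ Real.exp (-(b * t)) := by
    intro k
    have hP : conjRBF y (μR k) (fun i' => t * αR k i') ≤ Real.exp (-(b * t)) := by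
      calc conjRBF y (μR k) (fun i' => t * αR k i')
          ≤ ∏ i', Real.exp (-(t * αR k i' * |y i' - μR k i'|)) := by
            simp only [conjRBF]
            exact Finset.prod_le_prod (fun i _ => (rbf_nonneg _ _ _))
              (fun i _ => rbf_le_abs _ _ _ (mul_nonneg ht0.le (hαR k i).le))
        _ = Real.exp (∑ i', -(t * αR k i' * |y i' - μR k i'|)) := (Real.exp_sum _ _).symm
        _ ≤ Real.exp (-(b * t)) := by
            apply Real.exp_le_exp.mpr
            have hsum : b ≤ ∑ i', αR k i' * |y i' - μR k i'| := by
              refine le_trans (hbR ⟨0, hm⟩ k) ?_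
              refine Finset.single_le_sum (f := fun i' => αR k i' * |y i' - μR k i'|)
                (fun i _ => ?_) (Finset.mem_univ (⟨0, hm⟩ : Fin m))
              have := (hαR k i).le
              positivity
            have hEq : ∑ i', -(t * αR k i' * |y i' - μR k i'|)
                = -(t * ∑ i', αR k i' * |y i' - μR k i'|) := by
              rw [Finset.mul_sum, ← Finset.sum_neg_distrib]
              exact Finset.sum_congr rfl fun i _ => by ring
            rw [hEq]
            nlinarith
    have hΛ0 := hc0 (μL l) (fun i' => t * αL l i')
    have hΛ1 := hc1 (μL l) (fun i' => t * αL l i')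
    have hP0 := hr0 (μR k) (fun i' => t * αR k i')
    rw [decisionH]
    split_ifs with h
    · rw [abs_of_nonpos (by nlinarith)]
      nlinarith
    · rw [sub_zero, abs_of_nonneg (by nlinarith)]
      nlinarith
  -- expand the derivative and regroup
  simp only [fderiv_conjLog_apply]
  have hsplit :
      (∑ i, t * αL l i * (1 - logisticFun (y i) (μL l i) (t * αL l i))
          * conjLog y (μL l) (fun i => t * αL l i)
          * ((∑ j, wL i j * conjLog y (μL j) fun i' => t * αL j i')
            + ∑ k, wR i k * conjRBF y (μR k) fun i' => t * αR k i'))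
        - ((∑ i, ∑ j, t * αL l i * wL i j * (1 - logisticFun (y i) (μL l i) (t * αL l i))
              * conjLog y (fun i' => max (μL l i') (μL j i'))
                  (fun i' => t * (if μL j i' ≤ μL l i' then αL l i' else αL j i')))
          + ∑ i, ∑ k, t * αL l i * wR i k * (1 - logisticFun (y i) (μL l i) (t * αL l i))
              * decisionH y (μL l) (fun i' => t * αL l i') (μR k) (fun i' => t * αR k i'))
      = (∑ i, ∑ j, t * αL l i * wL i j * (1 - logisticFun (y i) (μL l i) (t * αL l i))
            * (conjLog y (μL l) (fun i' => t * αL l i')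
                * conjLog y (μL j) (fun i' => t * αL j i')
              - conjLog y (fun i' => max (μL l i') (μL j i'))
                  (fun i' => t * (if μL j i' ≤ μL l i' then αL l i' else αL j i'))))
        + ∑ i, ∑ k, t * αL l i * wR i k * (1 - logisticFun (y i) (μL l i) (t * αL l i))
            * (conjLog y (μL l) (fun i' => t * αL l i')
                * conjRBF y (μR k) (fun i' => t * αR k i')
              - decisionH y (μL l) (fun i' => t * αL l i') (μR k) (fun i' => t * αR k i')) := by
    rw [← Finset.sum_add_distrib, ← Finset.sum_add_distrib, ← Finset.sum_sub_distrib]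
    refine Finset.sum_congr rfl fun i _ => ?_
    rw [mul_add, Finset.mul_sum, Finset.mul_sum, add_sub_add_comm,
      ← Finset.sum_sub_distrib, ← Finset.sum_sub_distrib]
    exact congrArg₂ (· + ·)
      (Finset.sum_congr rfl fun j _ => by ring)
      (Finset.sum_congr rfl fun k _ => by ring)
  rw [hsplit]
  have hbound1 : ∀ i j,
      |t * αL l i * wL i j * (1 - logisticFun (y i) (μL l i) (t * αL l i))
        * (conjLog y (μL l) (fun i' => t * αL l i')
            * conjLog y (μL j) (fun i' => t * αL j i')
          - conjLog y (fun i' => max (μL l i') (μL j i'))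
              (fun i' => t * (if μL j i' ≤ μL l i' then αL l i' else αL j i')))|
      ≤ (αL l i * |wL i j| * m) * (t * Real.exp (-(b * t))) := by
    intro i j
    rw [abs_mul]
    have h1 : |t * αL l i * wL i j * (1 - logisticFun (y i) (μL l i) (t * αL l i))|
        ≤ t * αL l i * |wL i j| := by
      rw [abs_mul, abs_mul, abs_mul, abs_of_pos ht0, abs_of_pos (hαL l i)]
      have hl : |1 - logisticFun (y i) (μL l i) (t * αL l i)| ≤ 1 := by
        rw [abs_le]
        constructor
        · linarith [logistic_le_one (y i) (μL l i) (t * αL l i)]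
        · linarith [logistic_pos (y i) (μL l i) (t * αL l i)]
      nlinarith [abs_nonneg (wL i j),
        mul_nonneg (mul_nonneg ht0.le (hαL l i).le) (abs_nonneg (wL i j))]
    refine le_trans (mul_le_mul h1 (hL2 j) (abs_nonneg _)
      (mul_nonneg (mul_nonneg ht0.le (hαL l i).le) (abs_nonneg _)))
      (le_of_eq (by ring))
  have hbound2 : ∀ i k,
      |t * αL l i * wR i k * (1 - logisticFun (y i) (μL l i) (t * αL l i))
        * (conjLog y (μL l) (fun i' => t * αL l i')
            * conjRBF y (μR k) (fun i' => t * αR k i')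
          - decisionH y (μL l) (fun i' => t * αL l i') (μR k) (fun i' => t * αR k i'))|
      ≤ (αL l i * |wR i k|) * (t * Real.exp (-(b * t))) := by
    intro i k
    rw [abs_mul]
    have h1 : |t * αL l i * wR i k * (1 - logisticFun (y i) (μL l i) (t * αL l i))|
        ≤ t * αL l i * |wR i k| := by
      rw [abs_mul, abs_mul, abs_mul, abs_of_pos ht0, abs_of_pos (hαL l i)]
      have hl : |1 - logisticFun (y i) (μL l i) (t * αL l i)| ≤ 1 := by
        rw [abs_le]
        constructor
        · linarith [logistic_le_one (y i) (μL l i) (t * αL l i)]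
        · linarith [logistic_pos (y i) (μL l i) (t * αL l i)]
      nlinarith [abs_nonneg (wR i k),
        mul_nonneg (mul_nonneg ht0.le (hαL l i).le) (abs_nonneg (wR i k))]
    refine le_trans (mul_le_mul h1 (hR2 k) (abs_nonneg _)
      (mul_nonneg (mul_nonneg ht0.le (hαL l i).le) (abs_nonneg _)))
      (le_of_eq (by ring))
  have hexp : t * Real.exp (-(b * t)) ≤ (2 / b) * Real.exp (-(b / 2) * t) := by
    have h1 : b / 2 * t ≤ Real.exp (b / 2 * t) := by
      linarith [Real.add_one_le_exp (b / 2 * t)]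
    have h3 : (2 / b) * (b / 2 * t) = t := by field_simp
    have h4 := mul_le_mul_of_nonneg_left h1
      (le_of_lt (div_pos (by norm_num : (0:ℝ) < 2) hb))
    rw [h3] at h4
    calc t * Real.exp (-(b * t))
        ≤ ((2 / b) * Real.exp (b / 2 * t)) * Real.exp (-(b * t)) :=
          mul_le_mul_of_nonneg_right h4 (Real.exp_nonneg _)
      _ = (2 / b) * Real.exp (b / 2 * t + -(b * t)) := by rw [Real.exp_add]; ring
      _ = (2 / b) * Real.exp (-(b / 2) * t) := by
          congr 1
          ring_nf
  calc |(∑ i, ∑ j, t * αL l i * wL i j * (1 - logisticFun (y i) (μL l i) (t * αL l i))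
            * (conjLog y (μL l) (fun i' => t * αL l i')
                * conjLog y (μL j) (fun i' => t * αL j i')
              - conjLog y (fun i' => max (μL l i') (μL j i'))
                  (fun i' => t * (if μL j i' ≤ μL l i' then αL l i' else αL j i'))))
        + ∑ i, ∑ k, t * αL l i * wR i k * (1 - logisticFun (y i) (μL l i) (t * αL l i))
            * (conjLog y (μL l) (fun i' => t * αL l i')
                * conjRBF y (μR k) (fun i' => t * αR k i')
              - decisionH y (μL l) (fun i' => t * αL l i') (μR k) (fun i' => t * αR k i'))|
      ≤ (∑ i, ∑ j, (αL l i * |wL i j| * m) * (t * Real.exp (-(b * t))))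
        + ∑ i, ∑ k, (αL l i * |wR i k|) * (t * Real.exp (-(b * t))) := by
        refine le_trans (abs_add_le _ _) (add_le_add ?_ ?_)
        · refine le_trans (Finset.abs_sum_le_sum_abs _ _)
            (Finset.sum_le_sum fun i _ => le_trans (Finset.abs_sum_le_sum_abs _ _)
              (Finset.sum_le_sum fun j _ => hbound1 i j))
        · refine le_trans (Finset.abs_sum_le_sum_abs _ _)
            (Finset.sum_le_sum fun i _ => le_trans (Finset.abs_sum_le_sum_abs _ _)
              (Finset.sum_le_sum fun k _ => hbound2 i k))
    _ = K * (t * Real.exp (-(b * t))) := by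
        rw [hKdef]
        simp only [add_mul, Finset.sum_mul]
    _ ≤ K * ((2 / b) * Real.exp (-(b / 2) * t)) := mul_le_mul_of_nonneg_left hexp hK
    _ ≤ (K * (2 / b) + 1) * Real.exp (-(b / 2) * t) := by
        nlinarith [Real.exp_pos (-(b / 2) * t)]
end

section
/- Let m be a positive integer and μ, α ∈ ℝ^m. The conjunctive RBF y ↦ P(y; μ, α) is differentiable on ℝ^m and its partial derivative with respect to the i-th coordinate is given by ∂P(y; μ, α)/∂y_i = α_i · (1 − 2λ(y_i; μ_i, α_i)) · P(y; μ, α) for every y ∈ ℝ^m and every i = 1, …, m. -/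
open MeasureTheory ProbabilityTheory Real

lemma rbf_hasDerivAt (μ α y : ℝ) :
    HasDerivAt (fun t => rbfFun t μ α)
      (α * (1 - 2 * logisticFun y μ α) * rbfFun y μ α) y := by
  have hu : HasDerivAt (fun t : ℝ => Real.exp (-α * (t - μ)))
      (Real.exp (-α * (y - μ)) * (-α)) y := by
    have h1 : HasDerivAt (fun t : ℝ => -α * (t - μ)) (-α) y := by
      simpa using ((hasDerivAt_id y).sub_const μ).const_mul (-α)
    exact h1.exp
  have hd : HasDerivAt (fun t : ℝ => (1 + Real.exp (-α * (t - μ))) ^ 2)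
      ((2 : ℕ) * (1 + Real.exp (-α * (y - μ))) ^ 1 * (Real.exp (-α * (y - μ)) * (-α))) y :=
    (hu.const_add 1).pow 2
  have hE : (0 : ℝ) < 1 + Real.exp (-α * (y - μ)) :=
    add_pos one_pos (Real.exp_pos _)
  have hne : (1 + Real.exp (-α * (y - μ))) ^ 2 ≠ 0 := pow_ne_zero _ hE.ne'
  have := hu.div hd hne
  refine this.congr_deriv ?_
  unfold logisticFun rbfFun
  set E := Real.exp (-α * (y - μ)) with hEdef
  field_simp
  ring

theorem conjRBF_differentiable_and_partial_deriv (m : ℕ) (hm : 0 < m) (μ α : Fin m → ℝ) :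
    Differentiable ℝ (fun y : Fin m → ℝ => conjRBF y μ α) ∧
    ∀ (y : Fin m → ℝ) (i : Fin m),
      fderiv ℝ (fun z : Fin m → ℝ => conjRBF z μ α) y (Pi.single i 1)
        = α i * (1 - 2 * logisticFun (y i) (μ i) (α i)) * conjRBF y μ α := by
  classical
  set c : (Fin m → ℝ) → Fin m → ℝ := fun y i =>
    α i * (1 - 2 * logisticFun (y i) (μ i) (α i)) * rbfFun (y i) (μ i) (α i) with hc
  have hfact : ∀ (y : Fin m → ℝ) (i : Fin m),
      HasFDerivAt (fun z : Fin m → ℝ => rbfFun (z i) (μ i) (α i))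
        (c y i • (ContinuousLinearMap.proj i : (Fin m → ℝ) →L[ℝ] ℝ)) y := by
    intro y i
    have hp : HasFDerivAt (fun z : Fin m → ℝ => z i)
        (ContinuousLinearMap.proj i : (Fin m → ℝ) →L[ℝ] ℝ) y :=
      (ContinuousLinearMap.proj i : (Fin m → ℝ) →L[ℝ] ℝ).hasFDerivAt
    exact (rbf_hasDerivAt (μ i) (α i) (y i)).comp_hasFDerivAt y hp
  have hprod : ∀ y : Fin m → ℝ,
      HasFDerivAt (fun z : Fin m → ℝ => conjRBF z μ α)
        (∑ i, (∏ j ∈ Finset.univ.erase i, rbfFun (y j) (μ j) (α j)) •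
          (c y i • (ContinuousLinearMap.proj i : (Fin m → ℝ) →L[ℝ] ℝ))) y := by
    intro y
    have := HasFDerivAt.finset_prod (u := Finset.univ)
      (g := fun i (z : Fin m → ℝ) => rbfFun (z i) (μ i) (α i))
      (g' := fun i => c y i • (ContinuousLinearMap.proj i : (Fin m → ℝ) →L[ℝ] ℝ))
      (fun i _ => hfact y i)
    simpa [conjRBF] using this
  refine ⟨fun y => (hprod y).differentiableAt, fun y i => ?_⟩
  rw [(hprod y).fderiv]
  simp only [ContinuousLinearMap.coe_sum', Finset.sum_apply,
    ContinuousLinearMap.coe_smul', Pi.smul_apply, ContinuousLinearMap.proj_apply,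
    smul_eq_mul]
  rw [Finset.sum_eq_single i]
  · rw [Pi.single_eq_same]
    unfold conjRBF
    rw [hc]
    rw [← Finset.prod_erase_mul Finset.univ _ (Finset.mem_univ i)]
    ring
  · intro j _ hj
    rw [Pi.single_eq_of_ne hj]
    simp
  · intro h; exact absurd (Finset.mem_univ i) h
end

section
/- Let a > 0 and α ∈ ℝ, and let Y and M be independent random variables, each uniformly distributed on the interval [−a, a]. Then the expected value of the logistic function evaluated at the random measurement Y with random center M equals one half: E[λ(Y; M, α)] = 1/2. -/
open MeasureTheory ProbabilityTheory Real

lemma logistic_add_symm (α y m : ℝ) : logisticFun y m α + logisticFun m y α = 1 := by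
  unfold logisticFun
  have h1 : Real.exp (-α * (m - y)) = (Real.exp (-α * (y - m)))⁻¹ := by
    rw [← Real.exp_neg]; ring_nf
  rw [h1]
  have he := (Real.exp_pos (-α * (y - m)))
  have h2 : 1 + Real.exp (-α * (y - m)) > 0 := by positivity
  field_simp
  ring

lemma logistic_cont (α : ℝ) : Continuous (fun p : ℝ × ℝ => logisticFun p.1 p.2 α) := by
  unfold logisticFun
  apply Continuous.div continuous_const
  · fun_prop
  · intro p
    have := Real.exp_pos (-α * (p.1 - p.2))
    positivity

lemma logistic_bound (α : ℝ) (p : ℝ × ℝ) : ‖logisticFun p.1 p.2 α‖ ≤ 1 := by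
  unfold logisticFun
  have he := Real.exp_pos (-α * (p.1 - p.2))
  rw [Real.norm_eq_abs, abs_of_nonneg (by positivity)]
  rw [div_le_one (by positivity)]
  linarith

theorem expectation_logistic_uniform
    {Ω : Type*} [MeasurableSpace Ω] (Pr : Measure Ω) [IsProbabilityMeasure Pr]
    (a α : ℝ) (ha : 0 < a) (Y M : Ω → ℝ)
    (hY : pdf.IsUniform Y (Set.Icc (-a) a) Pr)
    (hM : pdf.IsUniform M (Set.Icc (-a) a) Pr)
    (hInd : IndepFun Y M Pr) :
    ∫ ω, logisticFun (Y ω) (M ω) α ∂Pr = 1 / 2 := by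
  have hs0 : volume (Set.Icc (-a) a) ≠ 0 := by
    simp only [Real.volume_Icc]
    simp only [ne_eq, ENNReal.ofReal_eq_zero, not_le]
    linarith
  have hsT : volume (Set.Icc (-a) a) ≠ ⊤ := by
    simp [Real.volume_Icc]
  have hYm : AEMeasurable Y Pr := hY.aemeasurable hs0 hsT
  have hMm : AEMeasurable M Pr := hM.aemeasurable hs0 hsT
  have hmapYM : Pr.map Y = Pr.map M := hY.trans hM.symm
  set ν := Pr.map Y with hν
  have hνprob : IsProbabilityMeasure ν := Measure.isProbabilityMeasure_map hYm
  have hjoint : Pr.map (fun ω => (Y ω, M ω)) = ν.prod ν := by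
    rw [(ProbabilityTheory.indepFun_iff_map_prod_eq_prod_map_map hYm hMm).mp hInd, ← hmapYM]
  set f : ℝ × ℝ → ℝ := fun p => logisticFun p.1 p.2 α with hf
  have hfc : Continuous f := logistic_cont α
  have hpair : AEMeasurable (fun ω => (Y ω, M ω)) Pr := hYm.prodMk hMm
  have hint : ∫ ω, logisticFun (Y ω) (M ω) α ∂Pr = ∫ p, f p ∂(ν.prod ν) := by
    rw [← hjoint, integral_map hpair hfc.aestronglyMeasurable]
  have hswap : ∫ p, f p ∂(ν.prod ν) = ∫ p, f p.swap ∂(ν.prod ν) := by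
    rw [MeasureTheory.integral_prod_swap]
  have hintg : Integrable f (ν.prod ν) :=
    Integrable.mono' (integrable_const 1) hfc.aestronglyMeasurable
      (Filter.Eventually.of_forall (logistic_bound α))
  have hintg2 : Integrable (fun p => f p.swap) (ν.prod ν) :=
    Integrable.mono' (integrable_const 1) (hfc.comp continuous_swap).aestronglyMeasurable
      (Filter.Eventually.of_forall fun p => logistic_bound α p.swap)
  have hsum : ∫ p, (f p + f p.swap) ∂(ν.prod ν) = 1 := by
    have : (fun p : ℝ × ℝ => f p + f p.swap) = fun _ => (1 : ℝ) := by
      funext p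
      exact logistic_add_symm α p.1 p.2
    rw [this]
    simp
  rw [integral_add hintg hintg2, ← hswap] at hsum
  rw [hint]
  linarith
end

section
/- Let m be a positive integer, a > 0, and α ∈ ℝ^m. Let Y_1, …, Y_m, M_1, …, M_m be 2m mutually independent random variables, each uniformly distributed on [−a, a], and set Y = (Y_1, …, Y_m), M = (M_1, …, M_m). Then the expected value of the conjunctive logistic function with random measurement Y and random center M is E[Λ(Y; M, α)] = 2^{−m}. -/
open MeasureTheory ProbabilityTheory Real

/-! ### Auxiliary lemmas -/

lemma logisticFun_nonneg (y μ c : ℝ) : 0 ≤ logisticFun y μ c := by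
  unfold logisticFun; positivity

lemma logisticFun_le_one (y μ c : ℝ) : logisticFun y μ c ≤ 1 := by
  unfold logisticFun
  rw [div_le_one (by positivity)]
  linarith [Real.exp_pos (-c * (y - μ))]

lemma logisticFun_add (y μ c : ℝ) : logisticFun y μ c + logisticFun μ y c = 1 := by
  unfold logisticFun
  have h1 : (0:ℝ) < 1 + Real.exp (-c * (y - μ)) := by positivity
  have h2 : (0:ℝ) < 1 + Real.exp (-c * (μ - y)) := by positivity
  have hu : Real.exp (-c * (μ - y)) = (Real.exp (-c * (y - μ)))⁻¹ := by
    rw [← Real.exp_neg]; ring_nf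
  rw [hu]
  have h0 : Real.exp (-c * (y - μ)) ≠ 0 := ne_of_gt (Real.exp_pos _)
  field_simp
  ring

lemma continuous_logisticFun (c : ℝ) :
    Continuous fun p : ℝ × ℝ => logisticFun p.1 p.2 c := by
  unfold logisticFun
  refine continuous_const.div ?_ fun p => by positivity
  fun_prop

lemma integrable_logistic_pair {X : Type*} [MeasurableSpace X] (μ : Measure X)
    [IsProbabilityMeasure μ] {g : X → ℝ × ℝ} (hg : Measurable g) (c : ℝ) :
    Integrable (fun x => logisticFun (g x).1 (g x).2 c) μ := by
  refine Integrable.mono' (integrable_const 1)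
    (((continuous_logisticFun c).measurable.comp hg).aestronglyMeasurable) ?_
  filter_upwards with p
  rw [Real.norm_eq_abs, abs_of_nonneg (logisticFun_nonneg _ _ _)]
  exact logisticFun_le_one _ _ _

lemma integral_logistic_prod (ν : Measure ℝ) [IsProbabilityMeasure ν] (c : ℝ) :
    ∫ p : ℝ × ℝ, logisticFun p.1 p.2 c ∂(ν.prod ν) = 1 / 2 := by
  have hcont := continuous_logisticFun c
  have hint : Integrable (fun p : ℝ × ℝ => logisticFun p.1 p.2 c) (ν.prod ν) :=
    integrable_logistic_pair _ measurable_id c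
  have hint2 : Integrable (fun p : ℝ × ℝ => logisticFun p.2 p.1 c) (ν.prod ν) :=
    integrable_logistic_pair _ measurable_swap c
  have hswap : ∫ p : ℝ × ℝ, logisticFun p.1 p.2 c ∂(ν.prod ν)
      = ∫ p : ℝ × ℝ, logisticFun p.2 p.1 c ∂(ν.prod ν) := by
    have h := integral_map (f := fun p : ℝ × ℝ => logisticFun p.1 p.2 c)
      (φ := Prod.swap) measurable_swap.aemeasurable
      (μ := ν.prod ν) hcont.aestronglyMeasurable
    rw [Measure.prod_swap] at h
    simpa using h
  have hsum : ∫ p : ℝ × ℝ, (logisticFun p.1 p.2 c + logisticFun p.2 p.1 c) ∂(ν.prod ν)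
      = 1 := by
    simp [logisticFun_add]
  rw [integral_add hint hint2] at hsum
  linarith [hswap, hsum]

lemma integral_logistic_indep {Ω : Type*} [MeasurableSpace Ω] {Pr : Measure Ω}
    [IsProbabilityMeasure Pr] {X Z : Ω → ℝ} (hX : Measurable X) (hZ : Measurable Z)
    {ν : Measure ℝ} [IsProbabilityMeasure ν]
    (hmX : Pr.map X = ν) (hmZ : Pr.map Z = ν) (hind : IndepFun X Z Pr) (c : ℝ) :
    ∫ ω, logisticFun (X ω) (Z ω) c ∂Pr = 1 / 2 := by
  have hmap : Pr.map (fun ω => (X ω, Z ω)) = ν.prod ν := by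
    rw [(indepFun_iff_map_prod_eq_prod_map_map hX.aemeasurable hZ.aemeasurable).mp hind,
      hmX, hmZ]
  have key : ∫ ω, logisticFun (X ω) (Z ω) c ∂Pr
      = ∫ p : ℝ × ℝ, logisticFun p.1 p.2 c ∂(ν.prod ν) := by
    rw [← hmap, integral_map (hX.prodMk hZ).aemeasurable
      (continuous_logisticFun c).aestronglyMeasurable]
  rw [key, integral_logistic_prod]

lemma iIndepFun_congr {Ω ι : Type*} [MeasurableSpace Ω] {μ : Measure Ω}
    {f g : ι → Ω → ℝ} (h : ∀ i, f i =ᵐ[μ] g i)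
    (hf : iIndepFun f μ) :
    iIndepFun g μ := by
  classical
  rw [iIndepFun_iff_measure_inter_preimage_eq_mul] at hf ⊢
  intro S sets hsets
  have hae : ∀ (T : Finset ι), (⋂ i ∈ T, f i ⁻¹' sets i) =ᵐ[μ] (⋂ i ∈ T, g i ⁻¹' sets i) := by
    intro T
    have h' : ∀ᵐ ω ∂μ, ∀ i ∈ T, f i ω = g i ω :=
      (Filter.eventually_all_finset T).2 fun i _ => h i
    rw [Filter.eventuallyEq_set]
    filter_upwards [h'] with ω hω
    simp only [Set.mem_iInter, Set.mem_preimage]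
    exact ⟨fun H i hi => (hω i hi) ▸ H i hi, fun H i hi => (hω i hi).symm ▸ H i hi⟩
  have h1 : μ (⋂ i ∈ S, g i ⁻¹' sets i) = μ (⋂ i ∈ S, f i ⁻¹' sets i) :=
    (measure_congr (hae S)).symm
  have h2 : ∀ i ∈ S, μ (g i ⁻¹' sets i) = μ (f i ⁻¹' sets i) := by
    intro i hi
    have := hae {i}
    simpa using (measure_congr this).symm
  rw [h1, hf S hsets]
  exact (Finset.prod_congr rfl h2).symm

attribute [irreducible] logisticFun

lemma indepFun_prod_logistic {Ω : Type*} [MeasurableSpace Ω] {Pr : Measure Ω}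
    [IsProbabilityMeasure Pr] {m : ℕ} {f : (Fin m ⊕ Fin m) → Ω → ℝ}
    (hf : ∀ j, Measurable (f j))
    (hInd : iIndepFun f Pr)
    (α : Fin m → ℝ) (s : Finset (Fin m)) {i : Fin m} (hi : i ∉ s) :
    IndepFun (fun ω => ∏ j ∈ s, logisticFun (f (Sum.inl j) ω) (f (Sum.inr j) ω) (α j))
      (fun ω => logisticFun (f (Sum.inl i) ω) (f (Sum.inr i) ω) (α i)) Pr := by
  obtain ⟨S, T, hmemSl, hmemSr, hilT, hirT, hST⟩ :
      ∃ S T : Finset (Fin m ⊕ Fin m), (∀ j : s, Sum.inl (j : Fin m) ∈ S) ∧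
        (∀ j : s, Sum.inr (j : Fin m) ∈ S) ∧
        Sum.inl i ∈ T ∧ Sum.inr i ∈ T ∧ Disjoint S T := by
    refine ⟨s.image Sum.inl ∪ s.image Sum.inr, {Sum.inl i, Sum.inr i},
      fun j => Finset.mem_union_left _ (Finset.mem_image_of_mem _ j.2),
      fun j => Finset.mem_union_right _ (Finset.mem_image_of_mem _ j.2),
      by simp, by simp, ?_⟩
    rw [Finset.disjoint_left]
    rintro x hx hxT
    simp only [Finset.mem_union, Finset.mem_image] at hx
    simp only [Finset.mem_insert, Finset.mem_singleton] at hxT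
    rcases hx with ⟨j, hj, rfl⟩ | ⟨j, hj, rfl⟩ <;> rcases hxT with h | h <;> simp_all
  have h := hInd.indepFun_finset S T hST hf
  have hΦ : Measurable (fun x : ((j : S) → ℝ) =>
      ∏ j ∈ s.attach,
        logisticFun (x ⟨Sum.inl j, hmemSl j⟩) (x ⟨Sum.inr j, hmemSr j⟩) (α j)) := by
    refine Finset.measurable_prod _ fun j _ => ?_
    have hp : Measurable (fun x : ((j : S) → ℝ) =>
        (x ⟨Sum.inl j, hmemSl j⟩, x ⟨Sum.inr j, hmemSr j⟩)) :=
      (measurable_pi_apply _).prodMk (measurable_pi_apply _)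
    exact (continuous_logisticFun (α j)).measurable.comp hp
  have hΨ : Measurable
      (fun x : ((j : T) → ℝ) =>
        logisticFun (x ⟨Sum.inl i, hilT⟩) (x ⟨Sum.inr i, hirT⟩) (α i)) := by
    have hp : Measurable (fun x : ((j : T) → ℝ) =>
        (x ⟨Sum.inl i, hilT⟩, x ⟨Sum.inr i, hirT⟩)) :=
      (measurable_pi_apply _).prodMk (measurable_pi_apply _)
    exact (continuous_logisticFun (α i)).measurable.comp hp
  have hcomp := h.comp hΦ hΨ
  have e1 : ((fun x : ((j : S) → ℝ) =>
      ∏ j ∈ s.attach,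
        logisticFun (x ⟨Sum.inl j, hmemSl j⟩) (x ⟨Sum.inr j, hmemSr j⟩) (α j))
        ∘ (fun ω (j : S) => f j ω))
      = fun ω => ∏ j ∈ s, logisticFun (f (Sum.inl j) ω) (f (Sum.inr j) ω) (α j) := by
    funext ω
    simp only [Function.comp]
    rw [← Finset.prod_attach s
      (fun j => logisticFun (f (Sum.inl j) ω) (f (Sum.inr j) ω) (α j))]
  rw [e1] at hcomp
  exact hcomp

theorem expectation_conjLog_uniform
    {Ω : Type*} [MeasurableSpace Ω] (Pr : Measure Ω) [IsProbabilityMeasure Pr]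
    (m : ℕ) (hm : 0 < m) (a : ℝ) (ha : 0 < a) (α : Fin m → ℝ)
    (Y M : Fin m → Ω → ℝ)
    (hY : ∀ i, pdf.IsUniform (Y i) (Set.Icc (-a) a) Pr)
    (hM : ∀ i, pdf.IsUniform (M i) (Set.Icc (-a) a) Pr)
    (hInd : iIndepFun (Sum.elim Y M) Pr) :
    ∫ ω, conjLog (fun i => Y i ω) (fun i => M i ω) α ∂Pr = (1 / 2 : ℝ) ^ m := by
  classical
  have hvol0 : volume (Set.Icc (-a) a) ≠ 0 := by
    rw [Real.volume_Icc]
    simp only [ne_eq, ENNReal.ofReal_eq_zero, not_le]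
    linarith
  have hvoltop : volume (Set.Icc (-a) a) ≠ ⊤ := by
    rw [Real.volume_Icc]; exact ENNReal.ofReal_ne_top
  set ν : Measure ℝ := ProbabilityTheory.cond volume (Set.Icc (-a) a) with hν
  have hνprob : IsProbabilityMeasure ν :=
    ProbabilityTheory.cond_isProbabilityMeasure_of_finite hvol0 hvoltop
  have haem : ∀ j : Fin m ⊕ Fin m, AEMeasurable (Sum.elim Y M j) Pr := by
    rintro (i | i)
    · exact (hY i).aemeasurable hvol0 hvoltop
    · exact (hM i).aemeasurable hvol0 hvoltop
  set f : (Fin m ⊕ Fin m) → Ω → ℝ := fun j => (haem j).mk _ with hfdef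
  have hfmeas : ∀ j, Measurable (f j) := fun j => (haem j).measurable_mk
  have hfae : ∀ j, Sum.elim Y M j =ᵐ[Pr] f j := fun j => (haem j).ae_eq_mk
  have hInd' : iIndepFun f Pr :=
    iIndepFun_congr hfae hInd
  have hmap : ∀ j, Pr.map (f j) = ν := by
    rintro (i | i)
    · rw [← Measure.map_congr (hfae (Sum.inl i))]
      exact hY i
    · rw [← Measure.map_congr (hfae (Sum.inr i))]
      exact hM i
  -- each factor integrates to 1/2
  have hfactor : ∀ i : Fin m,
      ∫ ω, logisticFun (f (Sum.inl i) ω) (f (Sum.inr i) ω) (α i) ∂Pr = 1 / 2 := by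
    intro i
    refine integral_logistic_indep (hfmeas _) (hfmeas _) (hmap _) (hmap _) ?_ (α i)
    exact hInd'.indepFun (by simp)
  -- integral of partial products
  have hprod : ∀ s : Finset (Fin m),
      ∫ ω, ∏ j ∈ s, logisticFun (f (Sum.inl j) ω) (f (Sum.inr j) ω) (α j) ∂Pr
        = (1 / 2 : ℝ) ^ s.card := by
    intro s
    induction s using Finset.induction_on with
    | empty => simp
    | @insert i s hi ih =>
      have hindep := indepFun_prod_logistic hfmeas hInd' α s hi
      have hmeasP : AEStronglyMeasurable
          (fun ω => ∏ j ∈ s, logisticFun (f (Sum.inl j) ω) (f (Sum.inr j) ω) (α j)) Pr := by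
        refine (Finset.measurable_prod _ fun j _ => ?_).aestronglyMeasurable
        exact (continuous_logisticFun (α j)).measurable.comp
          ((hfmeas _).prodMk (hfmeas _))
      have hmeasI : AEStronglyMeasurable
          (fun ω => logisticFun (f (Sum.inl i) ω) (f (Sum.inr i) ω) (α i)) Pr :=
        ((continuous_logisticFun (α i)).measurable.comp
          ((hfmeas _).prodMk (hfmeas _))).aestronglyMeasurable
      have hmul := hindep.integral_mul_eq_mul_integral hmeasP hmeasI
      have e : (fun ω => ∏ j ∈ insert i s,
          logisticFun (f (Sum.inl j) ω) (f (Sum.inr j) ω) (α j))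
          = (fun ω => (∏ j ∈ s, logisticFun (f (Sum.inl j) ω) (f (Sum.inr j) ω) (α j))
              * logisticFun (f (Sum.inl i) ω) (f (Sum.inr i) ω) (α i)) := by
        funext ω
        rw [Finset.prod_insert hi, mul_comm]
      rw [e]
      calc ∫ ω, (∏ j ∈ s, logisticFun (f (Sum.inl j) ω) (f (Sum.inr j) ω) (α j))
              * logisticFun (f (Sum.inl i) ω) (f (Sum.inr i) ω) (α i) ∂Pr
          = (∫ ω, ∏ j ∈ s, logisticFun (f (Sum.inl j) ω) (f (Sum.inr j) ω) (α j) ∂Pr)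
              * ∫ ω, logisticFun (f (Sum.inl i) ω) (f (Sum.inr i) ω) (α i) ∂Pr := hmul
        _ = (1 / 2 : ℝ) ^ s.card * (1 / 2) := by rw [ih, hfactor i]
        _ = (1 / 2 : ℝ) ^ (insert i s).card := by
            rw [Finset.card_insert_of_notMem hi, pow_succ]
  -- transfer to the original variables
  have hae_int : ∫ ω, conjLog (fun i => Y i ω) (fun i => M i ω) α ∂Pr
      = ∫ ω, ∏ j : Fin m, logisticFun (f (Sum.inl j) ω) (f (Sum.inr j) ω) (α j) ∂Pr := by
    refine integral_congr_ae ?_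
    have h' : ∀ᵐ ω ∂Pr, ∀ j : Fin m ⊕ Fin m, Sum.elim Y M j ω = f j ω :=
      (MeasureTheory.ae_all_iff).2 fun j => hfae j
    filter_upwards [h'] with ω hω
    unfold conjLog
    refine Finset.prod_congr rfl fun j _ => ?_
    rw [← hω (Sum.inl j), ← hω (Sum.inr j)]
    rfl
  rw [hae_int]
  have := hprod Finset.univ
  rwa [Finset.card_univ, Fintype.card_fin] at this
end

section
/- Let m be a positive integer, a > 0, μ ∈ ℝ^m, and α ∈ ℝ^m with α_i ≠ 0 for every i. Let Y = (Y_1, …, Y_m) have mutually independent components, each uniformly distributed on [−a, a]. Then the expected value of the conjunctive RBF satisfies the strict bound E[P(Y; μ, α)] < 4^{−m}. -/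
open MeasureTheory ProbabilityTheory Real

lemma rbf_pos (y c d : ℝ) : 0 < rbfFun y c d := by
  unfold rbfFun
  have h := Real.exp_pos (-d * (y - c))
  positivity

lemma rbf_le (y c d : ℝ) : rbfFun y c d ≤ 1 / 4 := by
  unfold rbfFun
  have h := Real.exp_pos (-d * (y - c))
  rw [div_le_div_iff₀ (by positivity) (by norm_num)]
  nlinarith [sq_nonneg (1 - Real.exp (-d * (y - c)))]

lemma rbf_lt (y c d : ℝ) (hd : d ≠ 0) (hy : y ≠ c) : rbfFun y c d < 1 / 4 := by
  unfold rbfFun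
  have h := Real.exp_pos (-d * (y - c))
  have hne : -d * (y - c) ≠ 0 := by
    exact mul_ne_zero (neg_ne_zero.mpr hd) (sub_ne_zero.mpr hy)
  have h1 : Real.exp (-d * (y - c)) ≠ 1 := by
    simp only [ne_eq, Real.exp_eq_one_iff]; exact hne
  have h2 : 0 < (1 - Real.exp (-d * (y - c))) ^ 2 := by
    have : (1 : ℝ) - Real.exp (-d * (y - c)) ≠ 0 := sub_ne_zero.mpr (Ne.symm h1)
    positivity
  rw [div_lt_div_iff₀ (by positivity) (by norm_num)]
  nlinarith

lemma rbf_measurable (c d : ℝ) : Measurable fun y => rbfFun y c d := by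
  unfold rbfFun
  fun_prop

theorem expectation_conjRBF_uniform_lt
    {Ω : Type*} [MeasurableSpace Ω] (Pr : Measure Ω) [IsProbabilityMeasure Pr]
    (m : ℕ) (hm : 0 < m) (a : ℝ) (ha : 0 < a) (μ α : Fin m → ℝ)
    (hα : ∀ i, α i ≠ 0) (Y : Fin m → Ω → ℝ)
    (hY : ∀ i, pdf.IsUniform (Y i) (Set.Icc (-a) a) Pr)
    (hInd : iIndepFun Y Pr) :
    ∫ ω, conjRBF (fun i => Y i ω) μ α ∂Pr < (1 / 4 : ℝ) ^ m := by
  have hvol0 : volume (Set.Icc (-a) a) ≠ 0 := by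
    simp only [Real.volume_Icc, ne_eq, ENNReal.ofReal_eq_zero, not_le]
    linarith
  have hvolt : volume (Set.Icc (-a) a) ≠ ⊤ := by
    simp [Real.volume_Icc]
  have hYae : ∀ i, AEMeasurable (Y i) Pr := fun i =>
    (hY i).aemeasurable hvol0 hvolt
  set f : Ω → ℝ := fun ω => conjRBF (fun i => Y i ω) μ α with hf
  have hfmeas : AEMeasurable f Pr := by
    unfold f
    unfold conjRBF
    exact Finset.aemeasurable_fun_prod _ fun i _ =>
      (rbf_measurable (μ i) (α i)).comp_aemeasurable (hYae i)
  have hf_nonneg : ∀ ω, 0 ≤ f ω := fun ω =>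
    Finset.prod_nonneg fun i _ => (rbf_pos _ _ _).le
  have hf_le : ∀ ω, f ω ≤ (1 / 4 : ℝ) ^ m := by
    intro ω
    calc f ω ≤ ∏ _i : Fin m, (1 / 4 : ℝ) :=
          Finset.prod_le_prod (fun i _ => (rbf_pos _ _ _).le) (fun i _ => rbf_le _ _ _)
      _ = (1 / 4 : ℝ) ^ m := by simp
  have hint : Integrable f Pr := by
    refine (integrable_const ((1 / 4 : ℝ) ^ m)).mono' hfmeas.aestronglyMeasurable ?_
    filter_upwards with ω
    rw [Real.norm_eq_abs, abs_of_nonneg (hf_nonneg ω)]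
    exact hf_le ω
  set i0 : Fin m := ⟨0, hm⟩
  have hA : Pr (Y i0 ⁻¹' {μ i0}) = 0 := by
    rw [(hY i0).measure_preimage hvol0 hvolt (measurableSet_singleton _)]
    have h0 : volume (Set.Icc (-a) a ∩ {μ i0}) = 0 :=
      measure_mono_null Set.inter_subset_right (Real.volume_singleton)
    rw [h0, ENNReal.zero_div]
  set g : Ω → ℝ := fun ω => (1 / 4 : ℝ) ^ m - f ω with hg
  have hgint : Integrable g Pr := (integrable_const _).sub hint
  have hgpos : 0 < ∫ ω, g ω ∂Pr := by
    rw [integral_pos_iff_support_of_nonneg_ae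
      (Filter.Eventually.of_forall fun ω => sub_nonneg.2 (hf_le ω)) hgint]
    have hsub : Set.univ ⊆ (Y i0 ⁻¹' {μ i0}) ∪ Function.support g := by
      intro ω _
      by_cases hc : Y i0 ω = μ i0
      · exact Or.inl hc
      · refine Or.inr ?_
        have hlt : f ω < (1 / 4 : ℝ) ^ m := by
          have : f ω < ∏ _i : Fin m, (1 / 4 : ℝ) := by
            refine Finset.prod_lt_prod (fun i _ => rbf_pos _ _ _)
              (fun i _ => rbf_le _ _ _) ⟨i0, Finset.mem_univ _, ?_⟩
            exact rbf_lt _ _ _ (hα i0) hc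
          simpa using this
        simp only [Function.mem_support, hg]
        intro h
        rw [sub_eq_zero] at h
        exact absurd h.symm (ne_of_lt hlt)
    by_contra h
    push_neg at h
    have h0 : Pr (Function.support g) = 0 := le_antisymm h zero_le
    have h1 : (1 : ENNReal) ≤ 0 := by
      calc (1 : ENNReal) = Pr Set.univ := (measure_univ).symm
        _ ≤ Pr ((Y i0 ⁻¹' {μ i0}) ∪ Function.support g) := measure_mono hsub
        _ ≤ Pr (Y i0 ⁻¹' {μ i0}) + Pr (Function.support g) := measure_union_le _ _
        _ = 0 := by rw [hA, h0, add_zero]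
    simp at h1
  have hgeq : ∫ ω, g ω ∂Pr = (1 / 4 : ℝ) ^ m - ∫ ω, f ω ∂Pr := by
    rw [hg]
    rw [integral_sub (integrable_const _) hint, integral_const, probReal_univ]
    simp
  have : ∫ ω, f ω ∂Pr < (1 / 4 : ℝ) ^ m := by linarith [hgeq ▸ hgpos]
  exact this
end
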